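/- Keep the hypotheses H(K_V), H(K_Q), H(A), H(b), H(Φ)₂, H(Ψ) with α_Φ + α_Ψ < m_A. If (u₁,p₁) and (u₂,p₂) solve the mixed variational-hemivariational inequality with right-hand sides f₁ and f₂ respectively, then ‖u₁ − u₂‖_V ≤ (1/(m_A − α_Φ − α_Ψ))‖f₁ − f₂‖_{V*} and α_b‖p₁ − p₂‖_Q ≤ ‖f₁ − f₂‖_{V*} + M_A‖u₁ − u₂‖_V; hence ‖u₁−u₂‖_V + ‖p₁−p₂‖_Q ≤ c‖f₁−f₂‖_{V*} for a constant c depending only on m_A, M_A, α_Φ, α_Ψ, α_b. -/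

import Mathlib

set_option maxHeartbeats 1000000


open Filter

/-- The Clarke generalized directional derivative of `Ψ` at `u` in the direction `v`. -/
noncomputable def clarkeDeriv {V : Type*} [NormedAddCommGroup V] [NormedSpace ℝ V]
    (Ψ : V → ℝ) (u v : V) : ℝ :=
  limsup (fun p : V × ℝ => (Ψ (p.1 + p.2 • v) - Ψ p.1) / p.2)
    ((nhds u) ×ˢ (nhdsWithin (0 : ℝ) (Set.Ioi 0)))

section ClarkeAux

variable {V : Type*} [NormedAddCommGroup V] [NormedSpace ℝ V] {Ψ : V → ℝ}

private lemma limsup_map_eq {α β : Type*} (g : β → ℝ) (φ : α → β) (F : Filter α) :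
    limsup g (map φ F) = limsup (g ∘ φ) F := by
  show limsSup (map g (map φ F)) = limsSup (map (g ∘ φ) F)
  rw [Filter.map_map]

private lemma clarke_quot_bound (hΨ : LocallyLipschitz Ψ) (u v : V) :
    ∃ C : ℝ, 0 ≤ C ∧ ∀ᶠ p : V × ℝ in (nhds u) ×ˢ (nhdsWithin (0:ℝ) (Set.Ioi 0)),
      |(Ψ (p.1 + p.2 • v) - Ψ p.1) / p.2| ≤ C := by
  obtain ⟨K, t, ht, hK⟩ := hΨ u
  obtain ⟨ε, hε, hball⟩ := Metric.mem_nhds_iff.1 ht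
  set δ : ℝ := ε / (2 * (‖v‖ + 1)) with hδdef
  have hδ : 0 < δ := by positivity
  refine ⟨K * ‖v‖, by positivity, ?_⟩
  have h1 : Metric.ball u (ε/2) ∈ nhds u := Metric.ball_mem_nhds u (by positivity)
  have h2 : Set.Ioo (0:ℝ) δ ∈ nhdsWithin (0:ℝ) (Set.Ioi 0) :=
    Ioo_mem_nhdsGT_of_mem ⟨le_refl 0, hδ⟩
  filter_upwards [Filter.prod_mem_prod h1 h2] with p hp
  obtain ⟨hp1, hp2⟩ := hp
  have hs : 0 < p.2 := hp2.1
  have hd1 : dist (p.1 + p.2 • v) p.1 = p.2 * ‖v‖ := by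
    rw [dist_eq_norm]
    simp [norm_smul, abs_of_pos hs]
  have hmem1 : p.1 ∈ t := hball (by
    have := Metric.mem_ball.1 hp1
    exact Metric.mem_ball.2 (by linarith))
  have hmem2 : p.1 + p.2 • v ∈ t := by
    apply hball
    have htri : dist (p.1 + p.2 • v) u ≤ dist (p.1 + p.2 • v) p.1 + dist p.1 u :=
      dist_triangle _ _ _
    have hb1 := Metric.mem_ball.1 hp1
    have hsmall : p.2 * ‖v‖ < ε / 2 := by
      have h1' : p.2 * ‖v‖ ≤ p.2 * (‖v‖ + 1) := by nlinarith [hs.le]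
      have h2' : p.2 * (‖v‖ + 1) < δ * (‖v‖ + 1) := by nlinarith [hp2.2, norm_nonneg v]
      have h3' : δ * (‖v‖ + 1) = ε / 2 := by
        rw [hδdef]; field_simp
      linarith
    exact Metric.mem_ball.2 (by rw [hd1] at htri; linarith)
  have hlip := hK.dist_le_mul _ hmem2 _ hmem1
  rw [Real.dist_eq, hd1] at hlip
  rw [abs_div, abs_of_pos hs, div_le_iff₀ hs]
  calc |Ψ (p.1 + p.2 • v) - Ψ p.1| ≤ K * (p.2 * ‖v‖) := hlip
    _ = K * ‖v‖ * p.2 := by ring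

private lemma clarkeDeriv_smul_pos (hΨ : LocallyLipschitz Ψ) (u v : V) {c : ℝ} (hc : 0 < c) :
    clarkeDeriv Ψ u (c • v) = c * clarkeDeriv Ψ u v := by
  set F : Filter (V × ℝ) := (nhds u) ×ˢ (nhdsWithin (0:ℝ) (Set.Ioi 0)) with hF
  set g : V × ℝ → ℝ := fun p => (Ψ (p.1 + p.2 • v) - Ψ p.1) / p.2 with hg
  obtain ⟨C, hC0, hev⟩ := clarke_quot_bound hΨ u v
  have hbd_le : IsBoundedUnder (· ≤ ·) F g :=
    ⟨C, eventually_map.2 (hev.mono fun p hp => (le_abs_self _).trans hp)⟩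
  have hbd_ge : IsBoundedUnder (· ≥ ·) F g :=
    ⟨-C, eventually_map.2 (hev.mono fun p hp => (abs_le.1 hp).1)⟩
  have hcob : IsCoboundedUnder (· ≤ ·) F g := hbd_ge.isCoboundedUnder_le
  set φ : V × ℝ → V × ℝ := fun p => (p.1, c * p.2) with hφ
  have hmap : map φ F = F := by
    have h2 : map (fun t : ℝ => c * t) (nhdsWithin (0:ℝ) (Set.Ioi 0))
        = nhdsWithin (0:ℝ) (Set.Ioi 0) := by
      have h3 := (Homeomorph.mulLeft₀ c hc.ne').isEmbedding.map_nhdsWithin_eq (Set.Ioi (0:ℝ)) 0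
      simpa [Homeomorph.coe_mulLeft₀, Set.image_const_mul_Ioi_zero hc] using h3
    conv_rhs => rw [hF, ← Filter.map_id (f := nhds u), ← h2]
    rw [Filter.prod_map_map_eq]
    rfl
  have key : (fun p => c * g p) ∘ φ
      = fun p : V × ℝ => (Ψ (p.1 + p.2 • (c • v)) - Ψ p.1) / p.2 := by
    funext p
    simp only [Function.comp, hg, hφ]
    have harg : p.2 • (c • v) = (c * p.2) • v := by rw [smul_smul, mul_comm]
    rw [harg]
    set X := Ψ (p.1 + (c * p.2) • v) - Ψ p.1 with hX
    rw [(mul_div_assoc c X (c * p.2)).symm.trans (mul_div_mul_left X p.2 hc.ne')]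
  have e1 : clarkeDeriv Ψ u (c • v) = limsup ((fun p => c * g p) ∘ φ) F := by
    rw [key]; rfl
  rw [e1, ← limsup_map_eq, hmap]
  have hmono : Monotone (fun x : ℝ => c * x) := fun a b h => mul_le_mul_of_nonneg_left h hc.le
  have h4 := hmono.map_limsup_of_continuousAt (F := F) g
    ((continuous_const.mul continuous_id).continuousAt) hbd_le hcob
  exact h4.symm

private lemma clarkeDeriv_add_le (hΨ : LocallyLipschitz Ψ) (u v w : V) :
    clarkeDeriv Ψ u (v + w) ≤ clarkeDeriv Ψ u v + clarkeDeriv Ψ u w := by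
  set F : Filter (V × ℝ) := (nhds u) ×ˢ (nhdsWithin (0:ℝ) (Set.Ioi 0)) with hF
  set gv : V × ℝ → ℝ := fun p => (Ψ (p.1 + p.2 • v) - Ψ p.1) / p.2 with hgv
  set gw : V × ℝ → ℝ := fun p => (Ψ (p.1 + p.2 • w) - Ψ p.1) / p.2 with hgw
  set ψ : V × ℝ → V × ℝ := fun p => (p.1 + p.2 • w, p.2) with hψ
  have htend : Tendsto ψ F F := by
    rw [hψ, hF]
    refine Tendsto.prodMk ?_ tendsto_snd
    have h2 : Tendsto (fun p : V × ℝ => p.2) ((nhds u) ×ˢ (nhdsWithin (0:ℝ) (Set.Ioi 0)))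
        (nhds (0:ℝ)) := tendsto_snd.mono_right nhdsWithin_le_nhds
    have h3 := (tendsto_fst (f := nhds u)
      (g := nhdsWithin (0:ℝ) (Set.Ioi 0))).add (h2.smul_const w)
    simpa using h3
  obtain ⟨Cv, hCv0, hevv⟩ := clarke_quot_bound hΨ u v
  obtain ⟨Cw, hCw0, hevw⟩ := clarke_quot_bound hΨ u w
  have hevv' : ∀ᶠ p in F, |gv (ψ p)| ≤ Cv := htend.eventually hevv
  have ha_le : IsBoundedUnder (· ≤ ·) F (gv ∘ ψ) :=
    ⟨Cv, eventually_map.2 (hevv'.mono fun p hp => (le_abs_self _).trans hp)⟩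
  have ha_ge : IsBoundedUnder (· ≥ ·) F (gv ∘ ψ) :=
    ⟨-Cv, eventually_map.2 (hevv'.mono fun p hp => (abs_le.1 hp).1)⟩
  have hw_le : IsBoundedUnder (· ≤ ·) F gw :=
    ⟨Cw, eventually_map.2 (hevw.mono fun p hp => (le_abs_self _).trans hp)⟩
  have hw_ge : IsBoundedUnder (· ≥ ·) F gw :=
    ⟨-Cw, eventually_map.2 (hevw.mono fun p hp => (abs_le.1 hp).1)⟩
  have hv_le : IsBoundedUnder (· ≤ ·) F gv :=
    ⟨Cv, eventually_map.2 (hevv.mono fun p hp => (le_abs_self _).trans hp)⟩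
  have hsplit : (fun p : V × ℝ => (Ψ (p.1 + p.2 • (v + w)) - Ψ p.1) / p.2)
      = (gv ∘ ψ) + gw := by
    funext p
    simp only [Pi.add_apply, Function.comp, hgv, hgw, hψ]
    have harg : p.1 + p.2 • (v + w) = p.1 + p.2 • w + p.2 • v := by
      rw [smul_add]; abel
    rw [harg, ← add_div, sub_add_sub_cancel]
  have e1 : clarkeDeriv Ψ u (v + w) = limsup ((gv ∘ ψ) + gw) F := by
    rw [← hsplit]; rfl
  rw [e1]
  have h12 : limsup ((gv ∘ ψ) + gw) F ≤ limsup (gv ∘ ψ) F + limsup gw F :=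
    limsup_add_le ha_ge ha_le hw_ge.isCoboundedUnder_le hw_le
  have h34 : limsup (gv ∘ ψ) F ≤ limsup gv F := by
    rw [← limsup_map_eq gv ψ F]
    refine limsup_le_limsup_of_le htend ?_ hv_le
    show IsCobounded (· ≤ ·) (map gv (map ψ F))
    rw [Filter.map_map]
    exact ha_ge.isCoboundedUnder_le
  calc limsup ((gv ∘ ψ) + gw) F ≤ limsup (gv ∘ ψ) F + limsup gw F := h12
    _ ≤ limsup gv F + limsup gw F := add_le_add h34 (le_refl _)

private lemma nonneg_of_forall_smul_le {X Y : ℝ}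
    (h : ∀ s : ℝ, 0 < s → s ≤ 1 → s * Y ≤ X) : 0 ≤ X := by
  by_contra hX
  push_neg at hX
  rcases le_or_gt 0 Y with hY | hY
  · have h1 := h 1 one_pos le_rfl
    linarith
  · have h2Y : 2 * Y < 0 := by linarith
    have hs0 : 0 < min 1 (X / (2 * Y)) :=
      lt_min one_pos (div_pos_of_neg_of_neg hX h2Y)
    have h1 := h _ hs0 (min_le_left _ _)
    rcases min_cases 1 (X / (2 * Y)) with ⟨he, hle⟩ | ⟨he, _⟩
    · rw [he] at h1
      rw [le_div_iff_of_neg h2Y] at hle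
      linarith
    · rw [he] at h1
      have hYne : Y ≠ 0 := hY.ne
      have hid : X / (2 * Y) * Y = X / 2 := by field_simp
      rw [hid] at h1
      linarith

end ClarkeAux

/-- Lipschitz continuous dependence of the solution on the right-hand side: if `(u₁,p₁)`
and `(u₂,p₂)` solve the mixed variational-hemivariational inequality with right-hand sides
`f₁`, `f₂` respectively, then `‖u₁−u₂‖ ≤ (1/(m_A−α_Φ−α_Ψ))‖f₁−f₂‖`,
`α_b‖p₁−p₂‖ ≤ ‖f₁−f₂‖ + M_A‖u₁−u₂‖`, and `‖u₁−u₂‖ + ‖p₁−p₂‖ ≤ c‖f₁−f₂‖` for a constant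
`c > 0` depending only on `m_A, M_A, α_Φ, α_Ψ, α_b`. -/
theorem mixed_vhvi_lipschitz_dependence
    {V Q : Type*} [NormedAddCommGroup V] [InnerProductSpace ℝ V] [CompleteSpace V]
    [NormedAddCommGroup Q] [InnerProductSpace ℝ Q] [CompleteSpace Q]
    -- H(K_V)
    (K_V : Set V) (hKV : K_V.Nonempty) (hKVc : IsClosed K_V) (hKVconv : Convex ℝ K_V)
    (V₀ : Submodule ℝ V) (hV₀ : (V₀ : Set V) ⊆ K_V)
    -- H(K_Q)
    (K_Q : Set Q) (hKQ : K_Q.Nonempty) (hKQc : IsClosed K_Q) (hKQconv : Convex ℝ K_Q)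
    -- H(A)
    (A : V → V →L[ℝ] ℝ) (m_A M_A : ℝ) (hmA : 0 < m_A) (hMA : 0 < M_A)
    (hA_lip : ∀ v₁ v₂ : V, ‖A v₁ - A v₂‖ ≤ M_A * ‖v₁ - v₂‖)
    (hA_mono : ∀ v₁ v₂ : V, m_A * ‖v₁ - v₂‖ ^ 2 ≤ (A v₁ - A v₂) (v₁ - v₂))
    -- H(b)
    (b : V →ₗ[ℝ] Q →ₗ[ℝ] ℝ) (M_b : ℝ) (hMb : 0 < M_b)
    (hb_bd : ∀ (v : V) (q : Q), |b v q| ≤ M_b * ‖v‖ * ‖q‖)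
    (α_b : ℝ) (hαb : 0 < α_b)
    (hinfsup : ∀ q : Q, α_b * ‖q‖ ≤ ⨆ w : {w : V // w ∈ V₀ ∧ w ≠ 0}, b w q / ‖(w : V)‖)
    -- H(Φ)₂
    (Φ : V → V → ℝ) (α_Φ : ℝ) (hαΦ : 0 ≤ α_Φ)
    (hΦconv : ∀ u : V, ConvexOn ℝ Set.univ (Φ u))
    (hΦcont : ∀ u : V, Continuous (Φ u))
    (hΦ : ∀ u₁ u₂ v₁ v₂ : V,
      Φ u₁ v₂ - Φ u₁ v₁ + Φ u₂ v₁ - Φ u₂ v₂ ≤ α_Φ * ‖u₁ - u₂‖ * ‖v₁ - v₂‖)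
    (hΦinv : ∀ u : V, ∀ v ∈ K_V, ∀ w ∈ V₀, Φ u (v + w) = Φ u v)
    -- H(Ψ)
    (Ψ : V → ℝ) (hΨ_lip : LocallyLipschitz Ψ) (α_Ψ : ℝ) (hαΨ : 0 ≤ α_Ψ)
    (hΨ : ∀ v₁ v₂ : V,
      clarkeDeriv Ψ v₁ (v₂ - v₁) + clarkeDeriv Ψ v₂ (v₁ - v₂) ≤ α_Ψ * ‖v₁ - v₂‖ ^ 2)
    (hΨ₀ : ∀ v ∈ K_V, ∀ w ∈ V₀, clarkeDeriv Ψ v w = 0)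
    -- H(f) and smallness
    (f₁ f₂ : V →L[ℝ] ℝ) (hsmall : α_Φ + α_Ψ < m_A)
    -- two solutions
    (u₁ u₂ : V) (hu₁ : u₁ ∈ K_V) (hu₂ : u₂ ∈ K_V)
    (p₁ p₂ : Q) (hp₁ : p₁ ∈ K_Q) (hp₂ : p₂ ∈ K_Q)
    (hsol₁ : ∀ v ∈ K_V,
      A u₁ (v - u₁) + b (v - u₁) p₁ + Φ u₁ v - Φ u₁ u₁ + clarkeDeriv Ψ u₁ (v - u₁)
        ≥ f₁ (v - u₁))
    (hconstr₁ : ∀ q ∈ K_Q, b u₁ (q - p₁) ≤ 0)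
    (hsol₂ : ∀ v ∈ K_V,
      A u₂ (v - u₂) + b (v - u₂) p₂ + Φ u₂ v - Φ u₂ u₂ + clarkeDeriv Ψ u₂ (v - u₂)
        ≥ f₂ (v - u₂))
    (hconstr₂ : ∀ q ∈ K_Q, b u₂ (q - p₂) ≤ 0) :
    ‖u₁ - u₂‖ ≤ 1 / (m_A - α_Φ - α_Ψ) * ‖f₁ - f₂‖ ∧
      α_b * ‖p₁ - p₂‖ ≤ ‖f₁ - f₂‖ + M_A * ‖u₁ - u₂‖ ∧
      ∃ c : ℝ, 0 < c ∧ ‖u₁ - u₂‖ + ‖p₁ - p₂‖ ≤ c * ‖f₁ - f₂‖ := by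
  have hm : 0 < m_A - α_Φ - α_Ψ := by linarith
  -- ### Part 1 : estimate on `‖u₁ - u₂‖`
  have hb1 := hconstr₁ p₂ hp₂
  have hb2 := hconstr₂ p₁ hp₁
  have hs1 := hsol₁ u₂ hu₂
  have hs2 := hsol₂ u₁ hu₁
  have hΦ12 := hΦ u₁ u₂ u₁ u₂
  have hΨ12 := hΨ u₁ u₂
  have hmono := hA_mono u₁ u₂
  have hf : (f₁ - f₂) (u₁ - u₂) ≤ ‖f₁ - f₂‖ * ‖u₁ - u₂‖ := by
    calc (f₁ - f₂) (u₁ - u₂) ≤ |(f₁ - f₂) (u₁ - u₂)| := le_abs_self _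
      _ ≤ ‖f₁ - f₂‖ * ‖u₁ - u₂‖ := by
          simpa [Real.norm_eq_abs] using (f₁ - f₂).le_opNorm (u₁ - u₂)
  simp only [map_sub, ContinuousLinearMap.sub_apply, LinearMap.sub_apply]
    at hb1 hb2 hs1 hs2 hmono hf
  have key1 : (m_A - α_Φ - α_Ψ) * ‖u₁ - u₂‖ ^ 2 ≤ ‖f₁ - f₂‖ * ‖u₁ - u₂‖ := by
    nlinarith [hb1, hb2, hs1, hs2, hΦ12, hΨ12, hmono, hf]
  have claim1 : ‖u₁ - u₂‖ ≤ 1 / (m_A - α_Φ - α_Ψ) * ‖f₁ - f₂‖ := by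
    rcases eq_or_lt_of_le (norm_nonneg (u₁ - u₂)) with hd | hd
    · rw [← hd]; positivity
    · rw [one_div, inv_mul_eq_div]
      rw [le_div_iff₀ hm]
      nlinarith [key1, hd]
  -- ### Part 2 : the identity on `V₀` and the estimate on `‖p₁ - p₂‖`
  have key_ge : ∀ (u : V) (p : Q) (f : V →L[ℝ] ℝ), u ∈ K_V →
      (∀ v ∈ K_V,
        A u (v - u) + b (v - u) p + Φ u v - Φ u u + clarkeDeriv Ψ u (v - u) ≥ f (v - u)) →
      ∀ w ∈ V₀, f w ≤ A u w + b w p := by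
    intro u p f hu hsol w hw
    have hstep : ∀ s : ℝ, 0 < s → s ≤ 1 →
        s * (A u u + b u p - f u - (Φ u 0 - Φ u u) - clarkeDeriv Ψ u (-u))
          ≤ A u w + b w p - f w := by
      intro s hs hs1
      have hvK : u + w - s • u ∈ K_V := by
        have hrep : u + w - s • u = (1 - s) • u + s • (s⁻¹ • w) := by
          rw [smul_smul, mul_inv_cancel₀ hs.ne', one_smul, sub_smul, one_smul]; abel
        rw [hrep]
        exact hKVconv hu (hV₀ (V₀.smul_mem _ hw)) (by linarith) hs.le (by ring)
      have h1 := hsol _ hvK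
      have hv : (u + w - s • u) - u = w + s • (-u) := by rw [smul_neg]; abel
      rw [hv] at h1
      -- Φ bound by convexity and invariance
      have hΦb : Φ u (u + w - s • u) ≤ (1 - s) * Φ u u + s * Φ u 0 := by
        have hcomb := (hΦconv u).2 (Set.mem_univ (u + w)) (Set.mem_univ w)
          (by linarith : (0:ℝ) ≤ 1 - s) hs.le (by ring)
        have harg : (1 - s) • (u + w) + s • w = u + w - s • u := by
          rw [sub_smul, one_smul, smul_add]; abel
        rw [harg] at hcomb
        rw [hΦinv u u hu w hw] at hcomb
        have h0 : Φ u w = Φ u 0 := by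
          have := hΦinv u 0 (hV₀ V₀.zero_mem) w hw
          simpa using this
        rw [h0] at hcomb
        simpa [smul_eq_mul] using hcomb
      -- Ψ bound by subadditivity and positive homogeneity
      have hΨb : clarkeDeriv Ψ u (w + s • (-u)) ≤ s * clarkeDeriv Ψ u (-u) := by
        calc clarkeDeriv Ψ u (w + s • (-u))
            ≤ clarkeDeriv Ψ u w + clarkeDeriv Ψ u (s • (-u)) :=
              clarkeDeriv_add_le hΨ_lip u w _
          _ = s * clarkeDeriv Ψ u (-u) := by
              rw [hΨ₀ u hu w hw, clarkeDeriv_smul_pos hΨ_lip u (-u) hs, zero_add]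
      have eA : A u (w + s • (-u)) = A u w - s * A u u := by
        rw [map_add, map_smul, map_neg]
        simp [smul_eq_mul]; ring
      have eb : b (w + s • (-u)) p = b w p - s * b u p := by
        rw [map_add, map_smul, map_neg]
        simp [smul_eq_mul]; ring
      have ef : f (w + s • (-u)) = f w - s * f u := by
        rw [map_add, map_smul, map_neg]
        simp [smul_eq_mul]; ring
      rw [eA, eb, ef] at h1
      linarith [hΦb, hΨb, h1]
    have := nonneg_of_forall_smul_le hstep
    linarith
  have keq : ∀ (u : V) (p : Q) (f : V →L[ℝ] ℝ), u ∈ K_V →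
      (∀ v ∈ K_V,
        A u (v - u) + b (v - u) p + Φ u v - Φ u u + clarkeDeriv Ψ u (v - u) ≥ f (v - u)) →
      ∀ w ∈ V₀, A u w + b w p = f w := by
    intro u p f hu hsol w hw
    have hp' := key_ge u p f hu hsol w hw
    have hn := key_ge u p f hu hsol (-w) (V₀.neg_mem hw)
    have e1 : A u (-w) = -A u w := map_neg _ _
    have e2 : b (-w) p = -(b w p) := by rw [map_neg]; simp
    have e3 : f (-w) = -f w := map_neg _ _
    rw [e1, e2, e3] at hn
    linarith
  have keq₁ := keq u₁ p₁ f₁ hu₁ hsol₁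
  have keq₂ := keq u₂ p₂ f₂ hu₂ hsol₂
  set bound : ℝ := ‖f₁ - f₂‖ + M_A * ‖u₁ - u₂‖ with hbound
  have hbound0 : 0 ≤ bound := by positivity
  have hb_each : ∀ w : {w : V // w ∈ V₀ ∧ w ≠ 0},
      b (w : V) (p₁ - p₂) / ‖(w : V)‖ ≤ bound := by
    rintro ⟨w, hw, hwne⟩
    have e1 := keq₁ w hw
    have e2 := keq₂ w hw
    have hbw : b w (p₁ - p₂) = (f₁ - f₂) w - (A u₁ - A u₂) w := by
      have : b w (p₁ - p₂) = b w p₁ - b w p₂ := map_sub _ _ _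
      rw [this]
      simp only [ContinuousLinearMap.sub_apply]
      linarith
    have hnorm : 0 < ‖w‖ := norm_pos_iff.2 hwne
    rw [div_le_iff₀ hnorm, hbw]
    have hf' : (f₁ - f₂) w ≤ ‖f₁ - f₂‖ * ‖w‖ := by
      calc (f₁ - f₂) w ≤ |(f₁ - f₂) w| := le_abs_self _
        _ ≤ ‖f₁ - f₂‖ * ‖w‖ := by
            simpa [Real.norm_eq_abs] using (f₁ - f₂).le_opNorm w
    have hA' : -((A u₁ - A u₂) w) ≤ M_A * ‖u₁ - u₂‖ * ‖w‖ := by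
      calc -((A u₁ - A u₂) w) ≤ |(A u₁ - A u₂) w| := neg_le_abs _
        _ ≤ ‖A u₁ - A u₂‖ * ‖w‖ := by
            simpa [Real.norm_eq_abs] using (A u₁ - A u₂).le_opNorm w
        _ ≤ M_A * ‖u₁ - u₂‖ * ‖w‖ :=
            mul_le_mul_of_nonneg_right (hA_lip u₁ u₂) (norm_nonneg w)
    rw [hbound]
    nlinarith [hf', hA']
  have claim2 : α_b * ‖p₁ - p₂‖ ≤ ‖f₁ - f₂‖ + M_A * ‖u₁ - u₂‖ := by
    calc α_b * ‖p₁ - p₂‖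
        ≤ ⨆ w : {w : V // w ∈ V₀ ∧ w ≠ 0}, b (w : V) (p₁ - p₂) / ‖(w : V)‖ :=
          hinfsup (p₁ - p₂)
      _ ≤ bound := Real.iSup_le hb_each hbound0
  -- ### Part 3 : combined estimate
  refine ⟨claim1, claim2, ?_⟩
  set k : ℝ := 1 / (m_A - α_Φ - α_Ψ) with hk
  have hk0 : 0 < k := by positivity
  refine ⟨k + (1 + M_A * k) / α_b, ?_, ?_⟩
  · have : 0 < (1 + M_A * k) / α_b := div_pos (by positivity) hαb
    linarith
  · rw [← mul_le_mul_iff_right₀ hαb]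
    have e : α_b * ((k + (1 + M_A * k) / α_b) * ‖f₁ - f₂‖)
        = α_b * k * ‖f₁ - f₂‖ + (1 + M_A * k) * ‖f₁ - f₂‖ := by
      field_simp
    have h1 : α_b * ‖u₁ - u₂‖ ≤ α_b * (k * ‖f₁ - f₂‖) :=
      mul_le_mul_of_nonneg_left claim1 hαb.le
    have h2 : M_A * ‖u₁ - u₂‖ ≤ M_A * (k * ‖f₁ - f₂‖) :=
      mul_le_mul_of_nonneg_left claim1 hMA.le
    linarith [claim2, h1, h2, e]
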